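/- Let φ : ℝ³ → ℝ be a smooth graphical translator, i.e. Θ[φ] = 0. Then at every point of ℝ³ one has the identity L_φ φ = H_φ − 2·Hess φ(Dφ, Dφ)/(1+|Dφ|²)^{5/2}. (Here Hess φ(Dφ,Dφ)/(1+|Dφ|²)^{5/2} is the second fundamental form of graph(φ) evaluated twice at the tangential projection of the vertical direction e₄.) -/

import Mathlib

open Real

noncomputable section

/-- Euclidean 3-space. -/
abbrev E3 : Type := EuclideanSpace ℝ (Fin 3)

/-- The point (a,b,c) ∈ ℝ³. -/
def mk3 (a b c : ℝ) : E3 := (WithLp.equiv 2 (Fin 3 → ℝ)).symm ![a, b, c]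

/-- Partial derivative in the i-th coordinate direction. -/
def pd (i : Fin 3) (f : E3 → ℝ) (x : E3) : ℝ := fderiv ℝ f x (EuclideanSpace.single i 1)

/-- Squared norm of the gradient, |Dφ|². -/
def gradSq (φ : E3 → ℝ) (x : E3) : ℝ := ∑ i, (pd i φ x) ^ 2

/-- Divergence of a vector field on ℝ³, given componentwise. -/
def divg (F : Fin 3 → E3 → ℝ) (x : E3) : ℝ := ∑ i, pd i (F i) x

/-- Mean curvature of graph(φ): H_φ = 1/√(1+|Dφ|²). -/
def Hmc (φ : E3 → ℝ) (x : E3) : ℝ := 1 / sqrt (1 + gradSq φ x)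

/-- The translator operator Θ[φ] = div(Dφ/√(1+|Dφ|²)) − 1/√(1+|Dφ|²). -/
def Θop (φ : E3 → ℝ) (x : E3) : ℝ :=
  divg (fun i y => pd i φ y / sqrt (1 + gradSq φ y)) x - 1 / sqrt (1 + gradSq φ x)

/-- The linearized translator operator L_φ u = div(a_φ Du) + b_φ · Du. -/
def Lop (φ u : E3 → ℝ) (x : E3) : ℝ :=
  divg (fun i y => ∑ j, ((if i = j then (1:ℝ) else 0) / sqrt (1 + gradSq φ y)
        - pd i φ y * pd j φ y / (1 + gradSq φ y) ^ ((3:ℝ)/2)) * pd j u y) x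
  + ∑ i, pd i φ x * pd i u x / (1 + gradSq φ x) ^ ((3:ℝ)/2)

/-- Entries of the Hessian of φ. -/
def hess (φ : E3 → ℝ) (x : E3) (i j : Fin 3) : ℝ := pd i (pd j φ) x

variable {φ : E3 → ℝ}

lemma contDiff_pd (hφ : ContDiff ℝ (⊤ : ℕ∞) φ) (j : Fin 3) : ContDiff ℝ (⊤ : ℕ∞) (pd j φ) :=
  (hφ.fderiv_right (by simp)).clm_apply contDiff_const

lemma hasFDerivAt_pd (hφ : ContDiff ℝ (⊤ : ℕ∞) φ) (j : Fin 3) (x : E3) :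
    HasFDerivAt (pd j φ) (fderiv ℝ (pd j φ) x) x :=
  ((contDiff_pd hφ j).differentiable (by simp) x).hasFDerivAt

lemma hasFDerivAt_gradSq (hφ : ContDiff ℝ (⊤ : ℕ∞) φ) (x : E3) :
    HasFDerivAt (gradSq φ) (∑ j, (2 * pd j φ x) • fderiv ℝ (pd j φ) x) x := by
  have : ∀ j ∈ Finset.univ, HasFDerivAt (fun y => pd j φ y ^ 2)
      ((2 * pd j φ x) • fderiv ℝ (pd j φ) x) x := by
    intro j _
    have h := (hasFDerivAt_pd hφ j x).fun_mul (hasFDerivAt_pd hφ j x)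
    have : (fun y => pd j φ y ^ 2) = fun y => pd j φ y * pd j φ y := by
      funext y; ring
    rw [this]
    rw [two_mul, add_smul]
    exact h
  exact HasFDerivAt.fun_sum this

lemma gradSq_nonneg (φ : E3 → ℝ) (x : E3) : 0 ≤ gradSq φ x :=
  Finset.sum_nonneg fun i _ => sq_nonneg _

lemma one_add_pos (φ : E3 → ℝ) (x : E3) : 0 < 1 + gradSq φ x := by
  have := gradSq_nonneg φ x; linarith

lemma pd_key (hφ : ContDiff ℝ (⊤ : ℕ∞) φ) (e : ℝ) (j i : Fin 3) (x : E3) :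
    pd i (fun y => pd j φ y * (1 + gradSq φ y) ^ e) x
      = hess φ x i j * (1 + gradSq φ x) ^ e
        + pd j φ x * (e * (1 + gradSq φ x) ^ (e - 1)) * (2 * ∑ k, hess φ x i k * pd k φ x) := by
  have hpos := one_add_pos φ x
  have hj := hasFDerivAt_pd hφ j x
  have hq := hasFDerivAt_gradSq hφ x
  have h1 : HasFDerivAt (fun y => 1 + gradSq φ y)
      (∑ k, (2 * pd k φ x) • fderiv ℝ (pd k φ) x) x := hq.const_add 1
  have hr : HasDerivAt (fun t : ℝ => t ^ e) (e * (1 + gradSq φ x) ^ (e - 1))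
      (1 + gradSq φ x) := Real.hasDerivAt_rpow_const (Or.inl hpos.ne')
  have hcomp : HasFDerivAt (fun y => (1 + gradSq φ y) ^ e)
      ((e * (1 + gradSq φ x) ^ (e - 1)) • ∑ k, (2 * pd k φ x) • fderiv ℝ (pd k φ) x) x :=
    by have := hr.comp_hasFDerivAt x h1; exact this
  have hmul := hj.fun_mul hcomp
  have hfd := hmul.fderiv
  show fderiv ℝ _ x (EuclideanSpace.single i 1) = _
  rw [hfd]
  have hh : ∀ k, (fderiv ℝ (pd k φ) x) (EuclideanSpace.single i 1) = hess φ x i k := fun k => rfl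
  simp only [ContinuousLinearMap.add_apply, ContinuousLinearMap.smul_apply,
    ContinuousLinearMap.coe_sum', Finset.sum_apply, hh, smul_eq_mul, Finset.mul_sum]
  rw [add_comm]
  congr 1
  · ring
  · exact Finset.sum_congr rfl fun k _ => by ring

lemma rpow_half_nat (P : ℝ) (hP : 0 ≤ P) (n : ℕ) : P ^ ((n : ℝ)/2) = Real.sqrt P ^ n := by
  rw [Real.sqrt_eq_rpow, ← Real.rpow_natCast (P ^ ((1:ℝ)/2)) n, ← Real.rpow_mul hP,
    show (1:ℝ)/2 * n = (n:ℝ)/2 by ring]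

lemma rpow_neg_half_nat (P : ℝ) (hP : 0 ≤ P) (n : ℕ) :
    P ^ (-((n : ℝ)/2)) = (Real.sqrt P ^ n)⁻¹ := by
  rw [Real.rpow_neg hP, rpow_half_nat P hP n]

lemma theta_field (φ : E3 → ℝ) (j : Fin 3) :
    (fun y => pd j φ y / Real.sqrt (1 + gradSq φ y))
      = fun y => pd j φ y * (1 + gradSq φ y) ^ (-((1:ℝ)/2)) := by
  funext y
  rw [div_eq_mul_inv, Real.rpow_neg (one_add_pos φ y).le, Real.sqrt_eq_rpow]

lemma L_field (φ : E3 → ℝ) (i : Fin 3) :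
    (fun y => ∑ j, ((if i = j then (1:ℝ) else 0) / Real.sqrt (1 + gradSq φ y)
        - pd i φ y * pd j φ y / (1 + gradSq φ y) ^ ((3:ℝ)/2)) * pd j φ y)
      = fun y => pd i φ y * (1 + gradSq φ y) ^ (-((3:ℝ)/2)) := by
  funext y
  have hpos := one_add_pos φ y
  set s := Real.sqrt (1 + gradSq φ y) with hsdef
  have hs0 : 0 < s := Real.sqrt_pos.2 hpos
  have hsq : s ^ 2 = 1 + gradSq φ y := Real.sq_sqrt hpos.le
  have h3 : (1 + gradSq φ y) ^ ((3:ℝ)/2) = s ^ 3 := by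
    rw [show ((3:ℝ)/2) = ((3:ℕ):ℝ)/2 by norm_num, rpow_half_nat _ hpos.le]
  have h3' : (1 + gradSq φ y) ^ (-((3:ℝ)/2)) = (s ^ 3)⁻¹ := by
    rw [show (-((3:ℝ)/2)) = -(((3:ℕ):ℝ)/2) by norm_num, rpow_neg_half_nat _ hpos.le]
  rw [h3, h3']
  have hsum : ∑ j, ((if i = j then (1:ℝ) else 0) / s
        - pd i φ y * pd j φ y / s ^ 3) * pd j φ y
      = pd i φ y / s - pd i φ y * gradSq φ y / s ^ 3 := by
    simp only [sub_mul]
    rw [Finset.sum_sub_distrib]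
    congr 1
    · simp [div_mul_eq_mul_div, ite_mul, ← Finset.sum_div]
    · rw [gradSq, Finset.mul_sum, Finset.sum_div]
      exact Finset.sum_congr rfl fun j _ => by ring
  rw [hsum]
  have hq : gradSq φ y = s ^ 2 - 1 := by rw [hsq]; ring
  rw [hq]
  field_simp
  ring

lemma sum_split (h : Fin 3 → Fin 3 → ℝ) (g : Fin 3 → ℝ) (c1 c2 : ℝ) :
    ∑ i, (h i i * c1 + g i * c2 * (2 * ∑ k, h i k * g k))
      = (∑ i, h i i) * c1 + 2 * c2 * ∑ i, ∑ k, h i k * g i * g k := by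
  rw [Finset.sum_add_distrib]
  congr 1
  · rw [← Finset.sum_mul]
  · rw [Finset.mul_sum]
    refine Finset.sum_congr rfl fun i _ => ?_
    simp only [Finset.mul_sum]
    refine Finset.sum_congr rfl fun k _ => by ring


/-- for a smooth graphical translator φ one has
L_φ φ = H_φ − 2·Hess φ(Dφ,Dφ)/(1+|Dφ|²)^{5/2} at every point. -/
theorem statement0 (φ : E3 → ℝ) (hφ : ContDiff ℝ (⊤ : ℕ∞) φ)
    (hsol : ∀ x, Θop φ x = 0) (x : E3) :
    Lop φ φ x = Hmc φ x
      - 2 * (∑ i, ∑ j, hess φ x i j * pd i φ x * pd j φ x) / (1 + gradSq φ x) ^ ((5:ℝ)/2) := by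
  have hpos := one_add_pos φ x
  set s := Real.sqrt (1 + gradSq φ x) with hsdef
  have hs0 : 0 < s := Real.sqrt_pos.2 hpos
  have hsq : s ^ 2 = 1 + gradSq φ x := Real.sq_sqrt hpos.le
  have e1conv : (1 + gradSq φ x) ^ (-((1:ℝ)/2)) = (s ^ 1)⁻¹ := by
    rw [show (-((1:ℝ)/2)) = -(((1:ℕ):ℝ)/2) by norm_num, rpow_neg_half_nat _ hpos.le]
  have e3conv : (1 + gradSq φ x) ^ (-((1:ℝ)/2) - 1) = (s ^ 3)⁻¹ := by
    rw [show (-((1:ℝ)/2) - 1) = -(((3:ℕ):ℝ)/2) by norm_num, rpow_neg_half_nat _ hpos.le]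
  have e3conv' : (1 + gradSq φ x) ^ (-((3:ℝ)/2)) = (s ^ 3)⁻¹ := by
    rw [show (-((3:ℝ)/2)) = -(((3:ℕ):ℝ)/2) by norm_num, rpow_neg_half_nat _ hpos.le]
  have e5conv : (1 + gradSq φ x) ^ (-((3:ℝ)/2) - 1) = (s ^ 5)⁻¹ := by
    rw [show (-((3:ℝ)/2) - 1) = -(((5:ℕ):ℝ)/2) by norm_num, rpow_neg_half_nat _ hpos.le]
  have p3conv : (1 + gradSq φ x) ^ ((3:ℝ)/2) = s ^ 3 := by
    rw [show ((3:ℝ)/2) = ((3:ℕ):ℝ)/2 by norm_num, rpow_half_nat _ hpos.le]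
  have p5conv : (1 + gradSq φ x) ^ ((5:ℝ)/2) = s ^ 5 := by
    rw [show ((5:ℝ)/2) = ((5:ℕ):ℝ)/2 by norm_num, rpow_half_nat _ hpos.le]
  -- the translator equation
  have E1 := hsol x
  rw [Θop, divg] at E1
  simp only [theta_field φ] at E1
  simp only [pd_key hφ (-((1:ℝ)/2))] at E1
  rw [sum_split, e1conv, e3conv, pow_one] at E1
  -- the linearized operator
  rw [Lop, divg]
  simp only [L_field φ]
  simp only [pd_key hφ (-((3:ℝ)/2))]
  rw [sum_split, e3conv', e5conv, p3conv, Hmc, p5conv]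
  have hq2 : ∑ i, pd i φ x * pd i φ x / s ^ 3 = gradSq φ x / s ^ 3 := by
    rw [gradSq, Finset.sum_div]
    exact Finset.sum_congr rfl fun i _ => by ring
  rw [hq2]
  have hq : gradSq φ x = s ^ 2 - 1 := by rw [hsq]; ring
  rw [hq] at E1 ⊢
  set A := ∑ i, hess φ x i i
  set S := ∑ i, ∑ j, hess φ x i j * pd i φ x * pd j φ x
  have hss : √(1 + (s ^ 2 - 1)) = s := by rw [show 1 + (s ^ 2 - 1) = s ^ 2 by ring, Real.sqrt_sq hs0.le]
  simp only [hss] at E1 ⊢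
  field_simp at E1 ⊢
  linear_combination E1
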